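/- arXiv:0708.1131 — 2 statements merged into one kernel-verified Lean document; each statement's English description precedes it below -/
import Mathlib

section
/- Let n ≥ 1, m > 0, let ρ be a real-valued Schwartz function on ℝⁿ with ρ ≢ 0, and let U ∈ C²(ℂ) satisfy U(z) ≥ A − B|z|² for all z ∈ ℂ, where A ∈ ℝ and 0 ≤ B < m²/(2‖ρ‖²_{L²}). Then for every Ψ = (ψ, π) ∈ E one has the coercivity bound ‖Ψ‖²_E ≤ (2m²/(m² − 2B‖ρ‖²_{L²}))·(H(Ψ) − A). -/
noncomputable section

open MeasureTheory Complex Filter Metric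

/-- `ℝⁿ` as a Euclidean space. -/
abbrev Rn (n : ℕ) : Type := EuclideanSpace ℝ (Fin n)

/-- Fourier transform `f̂(ξ) = ∫ e^{-i ξ·x} f(x) dⁿx`. -/
def ft {n : ℕ} (f : Rn n → ℂ) (ξ : Rn n) : ℂ :=
  ∫ x : Rn n, Complex.exp (-Complex.I * ((inner ℝ x ξ : ℝ) : ℂ)) * f x

/-- Fourier transform of a real-valued function. -/
def ftR {n : ℕ} (ρ : Rn n → ℝ) : Rn n → ℂ :=
  ft (fun x => ((ρ x : ℝ) : ℂ))

/-- Pairing `⟨ρ,ψ⟩ = ∫ ρ̄ ψ` (with `ρ` real-valued). -/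
def pairR {n : ℕ} (ρ : Rn n → ℝ) (ψ : Rn n → ℂ) : ℂ :=
  ∫ x : Rn n, ((ρ x : ℝ) : ℂ) * ψ x

/-- Laplacian `Δf = ∑ ∂²f/∂xᵢ²`. -/
def lap {n : ℕ} (f : Rn n → ℂ) (x : Rn n) : ℂ :=
  ∑ i : Fin n, fderiv ℝ (fun y => fderiv ℝ f y (EuclideanSpace.single i 1)) x
      (EuclideanSpace.single i 1)

/-- Laplacian of a (real-valued) test function, complexified. -/
def lapT {n : ℕ} (α : SchwartzMap (Rn n) ℝ) : Rn n → ℂ :=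
  lap (fun x => ((α x : ℝ) : ℂ))

/-- Pointwise time derivative `ψ̇(x,t)`. -/
def ψdot {n : ℕ} (ψ : ℝ → Rn n → ℂ) (t : ℝ) (x : Rn n) : ℂ :=
  deriv (fun s => ψ s x) t

/-- The state `Ψ(t) = (ψ(·,t), ψ̇(·,t))`. -/
def KGstate {n : ℕ} (ψ : ℝ → Rn n → ℂ) (t : ℝ) : (Rn n → ℂ) × (Rn n → ℂ) :=
  (ψ t, ψdot ψ t)

/-- Weak (space-tested) formulation of `ψ̈ = Δψ - m²ψ + ρ F(⟨ρ,ψ⟩)`. -/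
def WeakKG {n : ℕ} (m : ℝ) (ρ : Rn n → ℝ) (F : ℂ → ℂ) (ψ : ℝ → Rn n → ℂ) : Prop :=
  ∀ (α : SchwartzMap (Rn n) ℝ) (t : ℝ),
    deriv (fun s => deriv (fun r => pairR (fun x => α x) (ψ r)) s) t
      = (∫ x : Rn n, lapT α x * ψ t x)
        - (m^2 : ℂ) * pairR (fun x => α x) (ψ t)
        + F (pairR ρ (ψ t)) * pairR (fun x => α x) (fun x => ((ρ x : ℝ) : ℂ))

/-- Weak formulation of the driven Klein-Gordon equation `φ̈ = Δφ - m²φ + ρ f(t)`. -/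
def WeakKGdriven {n : ℕ} (m : ℝ) (ρ : Rn n → ℝ) (f : ℝ → ℂ) (φ : ℝ → Rn n → ℂ) : Prop :=
  ∀ (α : SchwartzMap (Rn n) ℝ) (t : ℝ),
    deriv (fun s => deriv (fun r => pairR (fun x => α x) (φ r)) s) t
      = (∫ x : Rn n, lapT α x * φ t x)
        - (m^2 : ℂ) * pairR (fun x => α x) (φ t)
        + f t * pairR (fun x => α x) (fun x => ((ρ x : ℝ) : ℂ))

/-- Weak (distributional) stationary equation `-ω²φ = Δφ - m²φ + ρ F(⟨ρ,φ⟩)`. -/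
def StatEq {n : ℕ} (m : ℝ) (ρ : Rn n → ℝ) (F : ℂ → ℂ) (ω : ℝ) (φ : Rn n → ℂ) : Prop :=
  ∀ α : SchwartzMap (Rn n) ℝ,
    -((ω : ℂ)^2) * pairR (fun x => α x) φ
      = (∫ x : Rn n, lapT α x * φ x) - (m^2 : ℂ) * pairR (fun x => α x) φ
        + F (pairR ρ φ) * pairR (fun x => α x) (fun x => ((ρ x : ℝ) : ℂ))

/-- Membership in `H¹(ℝⁿ)`. -/
def MemH1 {n : ℕ} (f : Rn n → ℂ) : Prop :=
  MemLp f 2 volume ∧ MemLp (fun x => fderiv ℝ f x) 2 volume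

/-- Membership in the energy space `E = H¹ ⊕ L²`. -/
def MemE {n : ℕ} (Ψ : (Rn n → ℂ) × (Rn n → ℂ)) : Prop :=
  MemH1 Ψ.1 ∧ MemLp Ψ.2 2 volume

/-- Squared energy norm `‖Ψ‖²_E = ‖π‖²_{L²} + ‖∇ψ‖²_{L²} + m²‖ψ‖²_{L²}`. -/
def ENormSq {n : ℕ} (m : ℝ) (Ψ : (Rn n → ℂ) × (Rn n → ℂ)) : ℝ :=
  (∫ x : Rn n, ‖Ψ.2 x‖^2) + (∫ x : Rn n, ‖fderiv ℝ Ψ.1 x‖^2) + m^2 * ∫ x : Rn n, ‖Ψ.1 x‖^2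

/-- Distance associated with the energy norm. -/
def Edist {n : ℕ} (m : ℝ) (Ψ Φ : (Rn n → ℂ) × (Rn n → ℂ)) : ℝ :=
  Real.sqrt (ENormSq m (fun x => Ψ.1 x - Φ.1 x, fun x => Ψ.2 x - Φ.2 x))

/-- Squared Sobolev norm `‖ψ‖²_{H^s} = ‖(m²-Δ)^{s/2}ψ‖²_{L²}`, via the Fourier transform. -/
def HsNormSq {n : ℕ} (m s : ℝ) (f : Rn n → ℂ) : ℝ :=
  ((2 * Real.pi)^n)⁻¹ * ∫ ξ : Rn n, (m^2 + ‖ξ‖^2) ^ s * ‖ft f ξ‖^2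

/-- Squared norm in `E^{-ε} = H^{1-ε} ⊕ H^{-ε}`. -/
def ENegNormSq {n : ℕ} (m ε : ℝ) (Ψ : (Rn n → ℂ) × (Rn n → ℂ)) : ℝ :=
  HsNormSq m (-ε) Ψ.2 + HsNormSq m (1-ε) Ψ.1

/-- Distance associated with the `E^{-ε}` norm. -/
def ENegDist {n : ℕ} (m ε : ℝ) (Ψ Φ : (Rn n → ℂ) × (Rn n → ℂ)) : ℝ :=
  Real.sqrt (ENegNormSq m ε (fun x => Ψ.1 x - Φ.1 x, fun x => Ψ.2 x - Φ.2 x))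

/-- `ψ` is a finite-energy solution (in `C(ℝ,E)`) of the Cauchy problem with data `Ψ₀`. -/
def IsSol {n : ℕ} (m : ℝ) (ρ : Rn n → ℝ) (F : ℂ → ℂ)
    (Ψ₀ : (Rn n → ℂ) × (Rn n → ℂ)) (ψ : ℝ → Rn n → ℂ) : Prop :=
  WeakKG m ρ F ψ ∧ KGstate ψ 0 = Ψ₀ ∧ (∀ t, MemE (KGstate ψ t)) ∧
  ∀ t₀ : ℝ, Tendsto (fun t => Edist m (KGstate ψ t) (KGstate ψ t₀)) (nhds t₀) (nhds 0)

/-- `σ(ω) = (2π)^{-n} ∫ |ρ̂(ξ)|²/(ξ²+m²-ω²) dⁿξ`. -/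
def sigmaFn {n : ℕ} (m : ℝ) (ρ : Rn n → ℝ) (ω : ℝ) : ℝ :=
  ((2 * Real.pi)^n)⁻¹ * ∫ ξ : Rn n, ‖ftR ρ ξ‖^2 / (‖ξ‖^2 + m^2 - ω^2)

/-- `Z_ρ = {ω ∈ ℝ∖[-m,m] : ρ̂ vanishes on the sphere m²+ξ²=ω²}`. -/
def Zrho {n : ℕ} (m : ℝ) (ρ : Rn n → ℝ) : Set ℝ :=
  {ω : ℝ | m < |ω| ∧ ∀ ξ : Rn n, m^2 + ‖ξ‖^2 = ω^2 → ftR ρ ξ = 0}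

/-- Local `H^s` norm on the ball of radius `R`, defined by duality against
`H^{-s}`-normalized test functions supported in the ball. -/
def locHsNorm {n : ℕ} (m s R : ℝ) (f : Rn n → ℂ) : ℝ :=
  sSup {r : ℝ | ∃ g : SchwartzMap (Rn n) ℂ,
      tsupport (fun x => g x) ⊆ closedBall (0 : Rn n) R ∧
      HsNormSq m (-s) (fun x => g x) ≤ 1 ∧
      r = ‖∫ x : Rn n, (starRingEnd ℂ) (g x) * f x‖}

/-- The seminorm `‖Ψ‖_{E_loc^{-ε}} = Σ_{R≥1} 2^{-R} ‖Ψ‖_{E^{-ε},R}`. -/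
def ELocNegNorm {n : ℕ} (m ε : ℝ) (Ψ : (Rn n → ℂ) × (Rn n → ℂ)) : ℝ :=
  ∑' R : ℕ, (2:ℝ)^(-(R:ℝ)-1) *
    Real.sqrt ((locHsNorm m (-ε) ((R:ℝ)+1) Ψ.2)^2 + (locHsNorm m (1-ε) ((R:ℝ)+1) Ψ.1)^2)

/-- The Hamiltonian `H(Ψ) = ½‖Ψ‖²_E + U(⟨ρ,ψ⟩)`. -/
def Ham {n : ℕ} (m : ℝ) (ρ : Rn n → ℝ) (U : ℂ → ℝ) (Ψ : (Rn n → ℂ) × (Rn n → ℂ)) : ℝ :=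
  (1/2) * ENormSq m Ψ + U (pairR ρ Ψ.1)

/-- The charge `Q(Ψ) = (i/2)∫ (ψ̄π - π̄ψ)`. -/
def Charge {n : ℕ} (Ψ : (Rn n → ℂ) × (Rn n → ℂ)) : ℂ :=
  (Complex.I/2) * ∫ x : Rn n,
    ((starRingEnd ℂ) (Ψ.1 x) * Ψ.2 x - (starRingEnd ℂ) (Ψ.2 x) * Ψ.1 x)

/-- Local (squared) energy seminorm over the ball of radius `R`. -/
def LocENormSq {n : ℕ} (m R : ℝ) (Ψ : (Rn n → ℂ) × (Rn n → ℂ)) : ℝ :=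
  (∫ x in Metric.ball (0 : Rn n) R, ‖Ψ.2 x‖^2)
    + (∫ x in Metric.ball (0 : Rn n) R, ‖fderiv ℝ Ψ.1 x‖^2)
    + m^2 * ∫ x in Metric.ball (0 : Rn n) R, ‖Ψ.1 x‖^2

/-- Fourier–Laplace transform `h̃(ω) = ∫₀^∞ e^{iωt} h(t) dt`. -/
def FL (h : ℝ → ℂ) (ω : ℂ) : ℂ :=
  ∫ t in Set.Ioi (0:ℝ), Complex.exp (Complex.I * ω * (t:ℂ)) * h t

/-- `Σ(x,ω) = (2π)^{-n} ∫ e^{iξ·x} ρ̂(ξ)/(ξ²+m²-ω²) dⁿξ`. -/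
def SigmaC {n : ℕ} (m : ℝ) (ρ : Rn n → ℝ) (x : Rn n) (ω : ℂ) : ℂ :=
  ((2 * Real.pi)^n : ℝ)⁻¹ * ∫ ξ : Rn n,
    Complex.exp (Complex.I * ((inner ℝ ξ x : ℝ) : ℂ)) * ftR ρ ξ / (((‖ξ‖^2 + m^2 : ℝ) : ℂ) - ω^2)

/-- `‖Σ(·,ω+iε)‖²_{L²}` via the Plancherel formula. -/
def SigmaNormSq {n : ℕ} (m : ℝ) (ρ : Rn n → ℝ) (ω ε : ℝ) : ℝ :=
  ((2 * Real.pi)^n)⁻¹ * ∫ ξ : Rn n,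
    ‖ftR ρ ξ‖^2 / Complex.normSq ((((‖ξ‖^2 + m^2 : ℝ)) : ℂ) - ((ω : ℂ) + (ε:ℂ) * Complex.I)^2)

/-- `R(η) = (2π)^{-n} ∫_{|ξ|=η} |ρ̂(ξ)|² dS(ξ)`, realized as the derivative (in the
radius) of the integral of `|ρ̂|²` over balls. -/
def sphR {n : ℕ} (ρ : Rn n → ℝ) (η : ℝ) : ℝ :=
  ((2 * Real.pi)^n)⁻¹ * deriv (fun r => ∫ ξ in Metric.ball (0 : Rn n) r, ‖ftR ρ ξ‖^2) η

/-- `M(ω) = R(√(ω²-m²))/ω²`. -/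
def Mfun {n : ℕ} (m : ℝ) (ρ : Rn n → ℝ) (ω : ℝ) : ℝ :=
  sphR ρ (Real.sqrt (ω^2 - m^2)) / ω^2

/-- `ζ̌ᵉ(t) = ∫ e^{iωt} ζ(ω) dω`, pairing kernel for the Fourier transform
`h̃(ω) = ∫ e^{iωt}h(t)dt` of a bounded function against a Schwartz test function. -/
def invTest (ζ : SchwartzMap ℝ ℂ) (t : ℝ) : ℂ :=
  ∫ ω : ℝ, Complex.exp (Complex.I * (ω:ℂ) * (t:ℂ)) * ζ ω

/-- Support of the (tempered-distribution) Fourier transform of a bounded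
continuous function `g : ℝ → ℂ`: the points near which `g̃` does not vanish. -/
def FTsupp (g : ℝ → ℂ) : Set ℝ :=
  {ω₀ : ℝ | ∀ δ > (0:ℝ), ∃ ζ : SchwartzMap ℝ ℂ,
      tsupport (fun ω => ζ ω) ⊆ Metric.ball ω₀ δ ∧ (∫ t : ℝ, g t * invTest ζ t) ≠ 0}

/-- The solitary-wave profile `φ_ω` with `φ̂_ω(ξ) = c ρ̂(ξ)/(ξ²+m²-ω²)`. -/
def solProfile {n : ℕ} (m : ℝ) (ρ : Rn n → ℝ) (ω : ℝ) (c : ℂ) (x : Rn n) : ℂ :=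
  ((2 * Real.pi)^n : ℝ)⁻¹ * ∫ ξ : Rn n,
    Complex.exp (Complex.I * ((inner ℝ ξ x : ℝ) : ℂ)) *
      (c * ftR ρ ξ / (((‖ξ‖^2 + m^2 - ω^2 : ℝ)) : ℂ))


/-- Distance (in the `E_loc^{-ε}` seminorm) from a state to the solitary manifold `S`. -/
def distToS {n : ℕ} (m ε : ℝ) (ρ : Rn n → ℝ) (F : ℂ → ℂ)
    (Ψ : (Rn n → ℂ) × (Rn n → ℂ)) : ℝ :=
  sInf {d : ℝ | ∃ (ω : ℝ) (φ : Rn n → ℂ), MemH1 φ ∧ StatEq m ρ F ω φ ∧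
      d = ELocNegNorm m ε (fun x => Ψ.1 x - φ x, fun x => Ψ.2 x + Complex.I * (ω:ℂ) * φ x)}

/-- Coercivity bound. -/
theorem statement3 {n : ℕ} (hn : 1 ≤ n) (m : ℝ) (hm : 0 < m)
    (ρ : SchwartzMap (Rn n) ℝ) (hρ : ρ ≠ 0)
    (U : ℂ → ℝ) (hU : ContDiff ℝ 2 U)
    (A B : ℝ) (hB0 : 0 ≤ B) (hB : B < m^2 / (2 * ∫ x : Rn n, (ρ x)^2))
    (hUAB : ∀ z : ℂ, A - B * ‖z‖^2 ≤ U z)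
    (ψ π : Rn n → ℂ) (hmem : MemE (ψ, π)) :
    ENormSq m (ψ, π)
      ≤ (2 * m^2 / (m^2 - 2 * B * ∫ x : Rn n, (ρ x)^2)) *
          (Ham m (fun x => ρ x) U (ψ, π) - A) := by
  classical
  obtain ⟨⟨hψ2', hdψ2⟩, hπ2⟩ := hmem
  have hψ2 : MemLp ψ 2 volume := hψ2'
  set K : ℝ := ∫ x : Rn n, (ρ x)^2 with hKdef
  have hρcont : Continuous fun x : Rn n => ρ x := ρ.continuous
  have hρ2int : Integrable (fun x : Rn n => (ρ x)^2) volume := by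
    have h := (ρ.integrable (μ := volume)).bdd_mul hρcont.aestronglyMeasurable
      (c := SchwartzMap.seminorm ℝ 0 0 ρ) (ae_of_all _ fun x => SchwartzMap.norm_le_seminorm ℝ ρ x)
    simpa [pow_two] using h
  have hKpos : 0 < K := by
    rw [hKdef, integral_pos_iff_support_of_nonneg (fun x => sq_nonneg _) hρ2int]
    have hsupp : Function.support (fun x : Rn n => (ρ x)^2) = {x : Rn n | ρ x ≠ 0} := by
      ext x; simp [Function.mem_support, pow_eq_zero_iff]
    rw [hsupp]
    have hopen : IsOpen {x : Rn n | ρ x ≠ 0} :=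
      isOpen_compl_singleton.preimage hρcont
    obtain ⟨x₀, hx₀⟩ : ∃ x, ρ x ≠ 0 := by
      by_contra h
      push_neg at h
      exact hρ (SchwartzMap.ext fun x => h x)
    exact hopen.measure_pos volume ⟨x₀, hx₀⟩
  have hρCcont : Continuous (fun x : Rn n => ((ρ x : ℝ) : ℂ)) :=
    Complex.continuous_ofReal.comp hρcont
  have hρℒ : MemLp (fun x : Rn n => ((ρ x : ℝ) : ℂ)) 2 volume := by
    rw [memLp_two_iff_integrable_sq_norm hρCcont.aestronglyMeasurable]
    simpa [Complex.norm_real, sq_abs] using hρ2int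
  set Sψ : ℝ := ∫ x : Rn n, ‖ψ x‖^2 with hSψdef
  have hCS : ‖pairR (fun x => ρ x) ψ‖^2 ≤ K * Sψ := by
    set Lρ := hρℒ.toLp _ with hLρ
    set Lψ := hψ2.toLp _ with hLψ
    have hinner : (inner ℂ Lρ Lψ : ℂ) = pairR (fun x => ρ x) ψ := by
      rw [MeasureTheory.L2.inner_def, pairR]
      apply integral_congr_ae
      filter_upwards [hρℒ.coeFn_toLp, hψ2.coeFn_toLp] with x h1 h2
      rw [← hLρ] at h1; rw [← hLψ] at h2
      simp [h1, h2, RCLike.inner_apply, Complex.conj_ofReal, mul_comm]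
    have hinnerρρ : (inner ℂ Lρ Lρ : ℂ) = ((K : ℝ) : ℂ) := by
      rw [MeasureTheory.L2.inner_def]
      calc ∫ x : Rn n, (inner ℂ (Lρ x) (Lρ x) : ℂ)
          = ∫ x : Rn n, (((ρ x)^2 : ℝ) : ℂ) := by
            apply integral_congr_ae
            filter_upwards [hρℒ.coeFn_toLp] with x h1
            rw [← hLρ] at h1
            simp [h1, RCLike.inner_apply, Complex.conj_ofReal, ← Complex.ofReal_mul, pow_two, abs_mul_abs_self]
        _ = ((K : ℝ) : ℂ) := by rw [hKdef]; exact integral_ofReal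
    have hinnerψψ : (inner ℂ Lψ Lψ : ℂ) = ((Sψ : ℝ) : ℂ) := by
      rw [MeasureTheory.L2.inner_def]
      calc ∫ x : Rn n, (inner ℂ (Lψ x) (Lψ x) : ℂ)
          = ∫ x : Rn n, ((‖ψ x‖^2 : ℝ) : ℂ) := by
            apply integral_congr_ae
            filter_upwards [hψ2.coeFn_toLp] with x h1
            rw [RCLike.inner_apply, h1, RCLike.mul_conj]
            norm_cast
        _ = ((Sψ : ℝ) : ℂ) := by rw [hSψdef]; exact integral_ofReal
    have hnρ : ‖Lρ‖^2 = K := by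
      have h := norm_sq_eq_re_inner (𝕜 := ℂ) Lρ
      rw [hinnerρρ] at h
      simpa using h
    have hnψ : ‖Lψ‖^2 = Sψ := by
      have h := norm_sq_eq_re_inner (𝕜 := ℂ) Lψ
      rw [hinnerψψ] at h
      simpa using h
    calc ‖pairR (fun x => ρ x) ψ‖^2 = ‖(inner ℂ Lρ Lψ : ℂ)‖^2 := by rw [hinner]
      _ ≤ (‖Lρ‖ * ‖Lψ‖)^2 :=
          pow_le_pow_left₀ (norm_nonneg _) (norm_inner_le_norm (𝕜 := ℂ) Lρ Lψ) 2
      _ = K * Sψ := by rw [mul_pow, hnρ, hnψ]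
  have hSψ0 : 0 ≤ Sψ := integral_nonneg fun x => sq_nonneg _
  have hSπ0 : 0 ≤ ∫ x : Rn n, ‖π x‖^2 := integral_nonneg fun x => sq_nonneg _
  have hSd0 : 0 ≤ ∫ x : Rn n, ‖fderiv ℝ ψ x‖^2 := integral_nonneg fun x => sq_nonneg _
  have h2K : 0 < 2 * K := by linarith
  have hd : 0 < m^2 - 2 * B * K := by
    have := (lt_div_iff₀ h2K).mp hB
    nlinarith
  have hU' := hUAB (pairR (fun x => ρ x) ψ)
  simp only [Ham, ENormSq]
  rw [div_mul_eq_mul_div, le_div_iff₀ hd]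
  set Sπ : ℝ := ∫ x : Rn n, ‖π x‖^2
  set Sd : ℝ := ∫ x : Rn n, ‖fderiv ℝ ψ x‖^2
  nlinarith [hU', hCS, mul_nonneg hB0 hSψ0, mul_nonneg (mul_nonneg hB0 hKpos.le) hSψ0,
    mul_le_mul_of_nonneg_left hCS hB0, sq_nonneg m,
    mul_nonneg (mul_nonneg hB0 hKpos.le) (add_nonneg hSπ0 hSd0)]
end
end

section
/- Let n ≥ 1, m > 0, and let ρ be a real-valued Schwartz function on ℝⁿ with ρ ≢ 0. Let I ⊂ ℝ be a compact interval with I ∩ ([−m,m] ∪ Z_ρ) = ∅. Then there exists ε_I > 0 such that for all ω ∈ I and all 0 < ε ≤ ε_I, ‖Σ(·, ω + iε)‖²_{L²(ℝⁿ)} ≥ M(ω)/(40ε), where M(ω) = R(√(ω² − m²))/ω² and R(η) = (2π)^{−n}∫_{|ξ|=η} |ρ̂(ξ)|² dS(ξ). -/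
noncomputable section

open MeasureTheory Complex Filter Metric

section AuxStatement11

open scoped FourierTransform RealInnerProductSpace Pointwise ENNReal NNReal

variable {n : ℕ}

/-- Complexification of a real-valued Schwartz function. -/
private def rhoC (ρ : SchwartzMap (Rn n) ℝ) : SchwartzMap (Rn n) ℂ where
  toFun x := ((ρ x : ℝ) : ℂ)
  smooth' := Complex.ofRealCLM.contDiff.comp ρ.smooth'
  decay' := by
    intro k N
    obtain ⟨C, hC⟩ := ρ.decay' k N
    refine ⟨C, fun x => ?_⟩
    have h1 : ‖iteratedFDeriv ℝ N (fun x : Rn n => ((ρ x : ℝ) : ℂ)) x‖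
        = ‖iteratedFDeriv ℝ N (fun x : Rn n => ρ x) x‖ := by
      have := Complex.ofRealLI.norm_iteratedFDeriv_comp_left (f := fun x : Rn n => ρ x)
        (x := x) (i := N) (ρ.smooth'.contDiffAt) (by exact_mod_cast le_top)
      exact this
    rw [h1]
    exact hC x

@[simp] private lemma rhoC_apply (ρ : SchwartzMap (Rn n) ℝ) (x : Rn n) :
    rhoC ρ x = ((ρ x : ℝ) : ℂ) := rfl

private lemma ftR_eq_fourier (ρ : SchwartzMap (Rn n) ℝ) (ξ : Rn n) :
    ftR (fun x => ρ x) ξ = 𝓕 (fun x : Rn n => ((ρ x : ℝ) : ℂ)) ((2 * Real.pi)⁻¹ • ξ) := by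
  rw [Real.fourier_eq']
  unfold ftR ft
  refine integral_congr_ae (Filter.Eventually.of_forall fun v => ?_)
  simp only [smul_eq_mul]
  congr 1
  have h2π : (2 * Real.pi) ≠ 0 := by positivity
  have hinner : (inner ℝ v ((2 * Real.pi)⁻¹ • ξ) : ℝ) = (2 * Real.pi)⁻¹ * (inner ℝ v ξ : ℝ) :=
    real_inner_smul_right _ _ _
  rw [hinner]
  congr 1
  have : -2 * Real.pi * ((2 * Real.pi)⁻¹ * (inner ℝ v ξ : ℝ)) = -(inner ℝ v ξ : ℝ) := by
    field_simp <;> ring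
  rw [this]
  push_cast
  ring

/-- `F = ‖ρ̂‖²`. -/
private def Ffun (ρ : SchwartzMap (Rn n) ℝ) : Rn n → ℝ :=
  fun ξ => ‖ftR (fun x => ρ x) ξ‖ ^ 2

private lemma Ffun_nonneg (ρ : SchwartzMap (Rn n) ℝ) (ξ : Rn n) : 0 ≤ Ffun ρ ξ := by
  simp only [Ffun]
  positivity

private lemma ftR_eq_schwartz (ρ : SchwartzMap (Rn n) ℝ) (ξ : Rn n) :
    ftR (fun x => ρ x) ξ
      = (SchwartzMap.fourierTransformCLM ℂ (rhoC ρ)) ((2 * Real.pi)⁻¹ • ξ) := by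
  rw [ftR_eq_fourier, SchwartzMap.fourierTransformCLM_apply]
  rfl

private lemma Ffun_continuous (ρ : SchwartzMap (Rn n) ℝ) : Continuous (Ffun ρ) := by
  have : Ffun ρ = fun ξ =>
      ‖(SchwartzMap.fourierTransformCLM ℂ (rhoC ρ)) ((2 * Real.pi)⁻¹ • ξ)‖ ^ 2 := by
    funext ξ; rw [Ffun, ftR_eq_schwartz]
  rw [this]
  exact (((SchwartzMap.fourierTransformCLM ℂ (rhoC ρ)).continuous.comp
    (continuous_const_smul _)).norm).pow 2

private lemma Ffun_bound (ρ : SchwartzMap (Rn n) ℝ) :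
    ∃ C : ℝ, 0 ≤ C ∧ ∀ ξ : Rn n, Ffun ρ ξ ≤ C * ‖(SchwartzMap.fourierTransformCLM ℂ (rhoC ρ))
      ((2 * Real.pi)⁻¹ • ξ)‖ ∧ Ffun ρ ξ ≤ C * C := by
  set q := SchwartzMap.fourierTransformCLM ℂ (rhoC ρ) with hq
  obtain ⟨C, hC⟩ := q.decay' 0 0
  have hCbd : ∀ y : Rn n, ‖q y‖ ≤ C := by
    intro y
    have := hC y
    simp [norm_iteratedFDeriv_zero] at this
    exact this
  have hC0 : 0 ≤ C := le_trans (norm_nonneg _) (hCbd 0)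
  refine ⟨C, hC0, fun ξ => ?_⟩
  have hval : Ffun ρ ξ = ‖q ((2 * Real.pi)⁻¹ • ξ)‖ ^ 2 := by
    rw [Ffun, ftR_eq_schwartz]
  constructor
  · rw [hval, sq]
    exact mul_le_mul_of_nonneg_right (hCbd _) (norm_nonneg _)
  · rw [hval, sq]
    exact mul_le_mul (hCbd _) (hCbd _) (norm_nonneg _) hC0

private lemma Ffun_integrable (ρ : SchwartzMap (Rn n) ℝ) : Integrable (Ffun ρ) := by
  obtain ⟨C, hC0, hC⟩ := Ffun_bound ρ
  set q := SchwartzMap.fourierTransformCLM ℂ (rhoC ρ) with hq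
  have h2π : ((2 * Real.pi)⁻¹ : ℝ) ≠ 0 := by positivity
  have hg : Integrable (fun ξ : Rn n => C * ‖q ((2 * Real.pi)⁻¹ • ξ)‖) :=
    (q.integrable.norm.comp_smul h2π).const_mul C
  refine hg.mono' ((Ffun_continuous ρ).aestronglyMeasurable) ?_
  refine Filter.Eventually.of_forall fun ξ => ?_
  rw [Real.norm_of_nonneg (Ffun_nonneg ρ ξ)]
  exact (hC ξ).1

/-- Polar-coordinates formula for integrals on `ℝⁿ`. -/
private lemma polar_eq (hn : 1 ≤ n) (f : Rn n → ℝ) (hf : Integrable f) :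
    ∫ x : Rn n, f x = ∫ t in Set.Ioi (0:ℝ), t ^ (n-1) *
      ∫ θ : sphere (0 : Rn n) 1, f (t • (θ : Rn n))
        ∂((volume : Measure (Rn n)).toSphere) := by
  haveI : Nontrivial (Rn n) := by
    refine Module.nontrivial_of_finrank_pos (R := ℝ) (M := Rn n) ?_
    rw [finrank_euclideanSpace_fin]; omega
  have hdim : Module.finrank ℝ (Rn n) = n := finrank_euclideanSpace_fin
  set ν := (volume : Measure (Rn n)).toSphere with hν
  set g : sphere (0 : Rn n) 1 × Set.Ioi (0:ℝ) → ℝ := fun p => f ((p.2 : ℝ) • (p.1 : Rn n))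
    with hg
  have hmp := (volume : Measure (Rn n)).measurePreserving_homeomorphUnitSphereProd
  rw [hdim] at hmp
  have hcomp : ∀ x : ({(0 : Rn n)}ᶜ : Set (Rn n)),
      g (homeomorphUnitSphereProd (Rn n) x) = f x := by
    intro x
    have hx : (x : Rn n) ≠ 0 := x.2
    simp only [hg, homeomorphUnitSphereProd_apply_fst_coe, homeomorphUnitSphereProd_apply_snd_coe]
    rw [smul_inv_smul₀ (norm_ne_zero_iff.2 hx)]
  have hemb := MeasurableEmbedding.subtype_coe (measurableSet_singleton (0 : Rn n)).compl
  -- integrability of `f` on the subtype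
  have hint_sub : Integrable (fun x : ({(0 : Rn n)}ᶜ : Set (Rn n)) => f x)
      ((volume : Measure (Rn n)).comap Subtype.val) := by
    have h1 : Integrable f ((volume : Measure (Rn n)).restrict {(0:Rn n)}ᶜ) := hf.restrict
    have h2 : Measure.map (Subtype.val)
        (((volume : Measure (Rn n))).comap (Subtype.val : ({(0 : Rn n)}ᶜ : Set (Rn n)) → Rn n))
        = (volume : Measure (Rn n)).restrict {(0:Rn n)}ᶜ := by
      rw [hemb.map_comap, Subtype.range_coe]
    exact (hemb.integrable_map_iff).1 (by rw [h2]; exact h1)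
  have hgi : Integrable g (ν.prod (Measure.volumeIoiPow (n-1))) := by
    rw [← hmp.integrable_comp_emb (Homeomorph.measurableEmbedding _)]
    exact hint_sub.congr (Filter.Eventually.of_forall fun x => (hcomp x).symm)
  have hmeas : Measurable fun t : Set.Ioi (0:ℝ) => Real.toNNReal ((t : ℝ) ^ (n-1)) :=
    (measurable_subtype_coe.pow_const _).real_toNNReal
  calc ∫ x : Rn n, f x
      = ∫ x in ({(0:Rn n)}ᶜ : Set (Rn n)), f x := by
        rw [MeasureTheory.restrict_compl_singleton]
    _ = ∫ x : ({(0:Rn n)}ᶜ : Set (Rn n)), f x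
          ∂((volume : Measure (Rn n)).comap Subtype.val) :=
        (integral_subtype_comap (measurableSet_singleton _).compl _).symm
    _ = ∫ x : ({(0:Rn n)}ᶜ : Set (Rn n)), g (homeomorphUnitSphereProd (Rn n) x)
          ∂((volume : Measure (Rn n)).comap Subtype.val) :=
        integral_congr_ae (Filter.Eventually.of_forall fun x => (hcomp x).symm)
    _ = ∫ p, g p ∂(ν.prod (Measure.volumeIoiPow (n-1))) :=
        hmp.integral_comp (Homeomorph.measurableEmbedding _) g
    _ = ∫ t : Set.Ioi (0:ℝ), (∫ θ, g (θ, t) ∂ν) ∂(Measure.volumeIoiPow (n-1)) :=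
        integral_prod_symm g hgi
    _ = ∫ t in Set.Ioi (0:ℝ), t ^ (n-1) * ∫ θ : sphere (0 : Rn n) 1, f (t • (θ : Rn n)) ∂ν := by
        simp only [Measure.volumeIoiPow, ENNReal.ofReal]
        rw [integral_withDensity_eq_integral_smul hmeas,
          integral_subtype_comap measurableSet_Ioi
            (fun t : ℝ => Real.toNNReal (t ^ (n-1)) • ∫ θ, f (t • (θ : Rn n)) ∂ν)]
        refine setIntegral_congr_fun measurableSet_Ioi fun t ht => ?_
        rw [NNReal.smul_def, Real.coe_toNNReal _ (pow_nonneg (le_of_lt ht) _), smul_eq_mul]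

/-- The ball integrals of `F` as an interval integral of the polar profile `h`. -/
private lemma ball_integral_eq (hn : 1 ≤ n) (ρ : SchwartzMap (Rn n) ℝ) {r : ℝ} (hr : 0 < r) :
    ∫ ξ in Metric.ball (0 : Rn n) r, Ffun ρ ξ
      = ∫ t in (0:ℝ)..r, (t ^ (n-1) *
          ∫ θ : sphere (0 : Rn n) 1, Ffun ρ (t • (θ : Rn n))
            ∂((volume : Measure (Rn n)).toSphere)) := by
  set ν := (volume : Measure (Rn n)).toSphere with hν
  set S : ℝ → ℝ := fun t => ∫ θ : sphere (0 : Rn n) 1, Ffun ρ (t • (θ : Rn n)) ∂ν with hS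
  set h : ℝ → ℝ := fun t => t ^ (n-1) * S t with hh
  have hind : Integrable ((Metric.ball (0:Rn n) r).indicator (Ffun ρ)) :=
    (Ffun_integrable ρ).indicator measurableSet_ball
  have h1 : ∫ ξ in Metric.ball (0 : Rn n) r, Ffun ρ ξ
      = ∫ ξ : Rn n, (Metric.ball (0:Rn n) r).indicator (Ffun ρ) ξ := by
    rw [integral_indicator measurableSet_ball]
  rw [h1, polar_eq hn _ hind]
  have h2 : ∀ t ∈ Set.Ioi (0:ℝ),
      t ^ (n-1) * ∫ θ : sphere (0 : Rn n) 1,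
        (Metric.ball (0:Rn n) r).indicator (Ffun ρ) (t • (θ : Rn n)) ∂ν
      = (Set.Iio r).indicator h t := by
    intro t ht
    have ht' : (0:ℝ) < t := ht
    have hnorm : ∀ θ : sphere (0 : Rn n) 1, ‖t • (θ : Rn n)‖ = t := by
      intro θ
      rw [norm_smul, Real.norm_of_nonneg ht'.le, mem_sphere_zero_iff_norm.1 θ.2, mul_one]
    by_cases htr : t < r
    · have : ∀ θ : sphere (0 : Rn n) 1,
          (Metric.ball (0:Rn n) r).indicator (Ffun ρ) (t • (θ : Rn n))
            = Ffun ρ (t • (θ : Rn n)) := by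
        intro θ
        rw [Set.indicator_of_mem]
        rw [mem_ball_zero_iff, hnorm θ]
        exact htr
      rw [Set.indicator_of_mem (Set.mem_Iio.2 htr)]
      simp only [hh, hS]
      rw [integral_congr_ae (Filter.Eventually.of_forall this)]
    · have : ∀ θ : sphere (0 : Rn n) 1,
          (Metric.ball (0:Rn n) r).indicator (Ffun ρ) (t • (θ : Rn n)) = 0 := by
        intro θ
        rw [Set.indicator_of_notMem]
        rw [mem_ball_zero_iff, hnorm θ]
        exact htr
      rw [Set.indicator_of_notMem (fun hmem => htr (Set.mem_Iio.1 hmem))]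
      rw [integral_congr_ae (Filter.Eventually.of_forall this)]
      simp
  rw [setIntegral_congr_fun measurableSet_Ioi h2]
  rw [integral_indicator measurableSet_Iio, Measure.restrict_restrict measurableSet_Iio]
  have : Set.Iio r ∩ Set.Ioi (0:ℝ) = Set.Ioo (0:ℝ) r := by
    ext x; simp [Set.mem_Ioo, and_comm]
  rw [this, intervalIntegral.integral_of_le hr.le, integral_Ioc_eq_integral_Ioo]

/-- Continuity of the spherical average profile. -/
private lemma S_continuous (ρ : SchwartzMap (Rn n) ℝ) :
    Continuous (fun t : ℝ => ∫ θ : sphere (0 : Rn n) 1, Ffun ρ (t • (θ : Rn n))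
      ∂((volume : Measure (Rn n)).toSphere)) := by
  obtain ⟨C, hC0, hC⟩ := Ffun_bound ρ
  refine continuous_of_dominated (bound := fun _ => C * C) ?_ ?_ ?_ ?_
  · intro t
    exact ((Ffun_continuous ρ).comp ((continuous_const_smul t).comp
      continuous_subtype_val)).aestronglyMeasurable
  · intro t
    refine Filter.Eventually.of_forall fun θ => ?_
    rw [Real.norm_of_nonneg (Ffun_nonneg ρ _)]
    exact (hC _).2
  · exact integrable_const _
  · refine Filter.Eventually.of_forall fun θ => ?_
    exact (Ffun_continuous ρ).comp (continuous_id.smul continuous_const)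

/-- Positivity of the spherical average. -/
private lemma S_pos (hn : 1 ≤ n) (ρ : SchwartzMap (Rn n) ℝ) {η : ℝ} (hη : 0 < η)
    {ξ₀ : Rn n} (hξ : ‖ξ₀‖ = η) (hF : 0 < Ffun ρ ξ₀) :
    0 < ∫ θ : sphere (0 : Rn n) 1, Ffun ρ (η • (θ : Rn n))
      ∂((volume : Measure (Rn n)).toSphere) := by
  haveI : Nontrivial (Rn n) := by
    refine Module.nontrivial_of_finrank_pos (R := ℝ) (M := Rn n) ?_
    rw [finrank_euclideanSpace_fin]; omega
  set ν := (volume : Measure (Rn n)).toSphere with hν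
  obtain ⟨C, hC0, hC⟩ := Ffun_bound ρ
  have hcont : Continuous (fun θ : sphere (0 : Rn n) 1 => Ffun ρ (η • (θ : Rn n))) :=
    (Ffun_continuous ρ).comp ((continuous_const_smul η).comp continuous_subtype_val)
  have hint : Integrable (fun θ : sphere (0 : Rn n) 1 => Ffun ρ (η • (θ : Rn n))) ν := by
    refine (integrable_const (C * C)).mono' hcont.aestronglyMeasurable ?_
    refine Filter.Eventually.of_forall fun θ => ?_
    rw [Real.norm_of_nonneg (Ffun_nonneg ρ _)]
    exact (hC _).2
  rw [integral_pos_iff_support_of_nonneg (fun θ => Ffun_nonneg ρ _) hint]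
  -- the support contains the open set U
  set U : Set (sphere (0 : Rn n) 1) := {θ | 0 < Ffun ρ (η • (θ : Rn n))} with hU
  have hUopen : IsOpen U := isOpen_Ioi.preimage hcont
  -- positivity of `ν` on the nonempty open set `U`
  have hνU : 0 < ν U := by
    rw [hν, Measure.toSphere_apply' _ hUopen.measurableSet]
    set W : Set (Rn n) :=
      ({(0 : Rn n)}ᶜ ∩ Metric.ball (0 : Rn n) 1) ∩
        (fun x : Rn n => Ffun ρ (η • (‖x‖⁻¹ • x))) ⁻¹' Set.Ioi (0:ℝ) with hW
    have hWsub : W ⊆ Set.Ioo (0:ℝ) 1 • (Subtype.val '' U) := by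
      rintro x ⟨⟨hx0, hx1⟩, hxF⟩
      have hx0' : x ≠ 0 := hx0
      have hxn : ‖x‖ ≠ 0 := norm_ne_zero_iff.2 hx0'
      rw [Set.mem_preimage, Set.mem_Ioi] at hxF
      rw [mem_ball_zero_iff] at hx1
      refine Set.mem_smul.2 ⟨‖x‖, ⟨norm_pos_iff.2 hx0', hx1⟩, ‖x‖⁻¹ • x, ?_, ?_⟩
      · refine ⟨⟨‖x‖⁻¹ • x, ?_⟩, hxF, rfl⟩
        rw [mem_sphere_zero_iff_norm, norm_smul, norm_inv, norm_norm, inv_mul_cancel₀ hxn]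
      · rw [smul_inv_smul₀ hxn]
    have hWopen : IsOpen W := by
      have hVopen : IsOpen ({(0 : Rn n)}ᶜ ∩ Metric.ball (0 : Rn n) 1) :=
        isOpen_compl_singleton.inter isOpen_ball
      refine ContinuousOn.isOpen_inter_preimage ?_ hVopen isOpen_Ioi
      refine (Ffun_continuous ρ).comp_continuousOn ?_
      refine ContinuousOn.const_smul ?_ η
      refine ContinuousOn.fun_smul ?_ continuousOn_id
      refine ContinuousOn.inv₀ continuous_norm.continuousOn ?_
      rintro x ⟨hx0, -⟩
      exact norm_ne_zero_iff.2 hx0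
    have hWne : W.Nonempty := by
      have hξ0 : ξ₀ ≠ 0 := by
        intro hcon
        rw [hcon, norm_zero] at hξ
        exact hη.ne hξ
      have hnx : ‖(2:ℝ)⁻¹ • (η⁻¹ • ξ₀)‖ = (2:ℝ)⁻¹ := by
        rw [norm_smul, norm_smul, hξ, norm_inv, norm_inv, Real.norm_ofNat,
          Real.norm_of_nonneg hη.le, inv_mul_cancel₀ hη.ne', mul_one]
      refine ⟨(2:ℝ)⁻¹ • (η⁻¹ • ξ₀), ⟨?_, ?_⟩, ?_⟩
      · intro hcon
        rw [Set.mem_singleton_iff] at hcon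
        rw [hcon, norm_zero] at hnx
        norm_num at hnx
      · rw [mem_ball_zero_iff, hnx]; norm_num
      · rw [Set.mem_preimage, Set.mem_Ioi, hnx, inv_inv]
        have hsc : η • ((2:ℝ) • ((2:ℝ)⁻¹ • (η⁻¹ • ξ₀))) = ξ₀ := by
          rw [smul_smul, smul_smul, smul_smul,
            show η * 2 * 2⁻¹ * η⁻¹ = 1 by field_simp <;> ring, one_smul]
        rw [hsc]
        exact hF
    have hWpos : 0 < (volume : Measure (Rn n)) W := hWopen.measure_pos volume hWne
    have hle : (volume : Measure (Rn n)) W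
        ≤ (volume : Measure (Rn n)) (Set.Ioo (0:ℝ) 1 • (Subtype.val '' U)) :=
      measure_mono hWsub
    have hdimpos : (0:ℝ≥0∞) < (Module.finrank ℝ (Rn n) : ℝ≥0∞) := by
      rw [finrank_euclideanSpace_fin]
      exact_mod_cast Nat.pos_of_ne_zero (by omega)
    exact ENNReal.mul_pos hdimpos.ne' (lt_of_lt_of_le hWpos hle).ne'
  refine lt_of_lt_of_le hνU (measure_mono ?_)
  intro θ hθ
  exact ne_of_gt hθ

end AuxStatement11



set_option maxHeartbeats 1000000 in
/-- Lower bound for `‖Σ(·,ω+iε)‖²_{L²}`, Lemma 2.6. -/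
theorem statement11 {n : ℕ} (hn : 1 ≤ n) (m : ℝ) (hm : 0 < m)
    (ρ : SchwartzMap (Rn n) ℝ) (hρ : ρ ≠ 0)
    (a b : ℝ) (hab : a ≤ b)
    (hI : Set.Icc a b ∩ (Set.Icc (-m) m ∪ Zrho m (fun x => ρ x)) = ∅) :
    ∃ εI > (0:ℝ), ∀ ω ∈ Set.Icc a b, ∀ ε : ℝ, 0 < ε → ε ≤ εI →
      Mfun m (fun x => ρ x) ω / (40 * ε) ≤ SigmaNormSq m (fun x => ρ x) ω ε := by
  classical
  set ν := (volume : Measure (Rn n)).toSphere with hν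
  set S : ℝ → ℝ := fun t => ∫ θ : sphere (0 : Rn n) 1, Ffun ρ (t • (θ : Rn n)) ∂ν with hSdef
  clear_value S
  set h : ℝ → ℝ := fun t => t ^ (n-1) * S t with hhdef
  clear_value h
  have hScont : Continuous S := by rw [hSdef]; exact S_continuous ρ
  have hhcont : Continuous h := by rw [hhdef]; exact (continuous_pow (n-1)).mul hScont
  -- `G` and its derivative
  set G : ℝ → ℝ := fun r => ∫ ξ in Metric.ball (0 : Rn n) r, ‖ftR (fun x => ρ x) ξ‖^2
    with hGdef
  clear_value G
  have hGball : ∀ r, 0 < r → G r = ∫ t in (0:ℝ)..r, h t := by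
    intro r hr
    have h0 := ball_integral_eq hn ρ hr
    rw [hGdef, hhdef, hSdef]
    simpa [Ffun] using h0
  have hderiv : ∀ η, 0 < η → deriv G η = h η := by
    intro η hη
    have h1 : HasDerivAt (fun r => ∫ t in (0:ℝ)..r, h t) (h η) η :=
      intervalIntegral.integral_hasDerivAt_right (hhcont.intervalIntegrable _ _)
        hhcont.stronglyMeasurable.stronglyMeasurableAtFilter hhcont.continuousAt
    have h2 : G =ᶠ[nhds η] (fun r => ∫ t in (0:ℝ)..r, h t) := by
      filter_upwards [eventually_gt_nhds hη] with r hr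
      exact hGball r hr
    rw [h2.deriv_eq]
    exact h1.deriv
  -- consequences of the spectral hypothesis
  have hnotm : ∀ ω ∈ Set.Icc a b, m < |ω| := by
    intro ω hω
    by_contra hc
    push_neg at hc
    have h1 : ω ∈ Set.Icc (-m) m := _root_.abs_le.1 hc
    have h2 : ω ∈ Set.Icc a b ∩ (Set.Icc (-m) m ∪ Zrho m (fun x => ρ x)) :=
      ⟨hω, Or.inl h1⟩
    rw [hI] at h2
    exact h2
  have hnotZ : ∀ ω ∈ Set.Icc a b, ∃ ξ₀ : Rn n,
      m^2 + ‖ξ₀‖^2 = ω^2 ∧ ftR (fun x => ρ x) ξ₀ ≠ 0 := by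
    intro ω hω
    by_contra hc
    push_neg at hc
    have h1 : ω ∈ Zrho m (fun x => ρ x) := ⟨hnotm ω hω, hc⟩
    have h2 : ω ∈ Set.Icc a b ∩ (Set.Icc (-m) m ∪ Zrho m (fun x => ρ x)) :=
      ⟨hω, Or.inr h1⟩
    rw [hI] at h2
    exact h2
  have hsq : ∀ ω ∈ Set.Icc a b, m^2 < ω^2 := by
    intro ω hω
    have h1 := hnotm ω hω
    nlinarith [_root_.sq_abs ω, _root_.abs_nonneg ω, hm]
  -- basic facts about `η(ω)`
  have hη_pos : ∀ ω ∈ Set.Icc a b, 0 < Real.sqrt (ω^2 - m^2) := by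
    intro ω hω
    exact Real.sqrt_pos.2 (by linarith [hsq ω hω])
  have hη_sq : ∀ ω ∈ Set.Icc a b, (Real.sqrt (ω^2 - m^2))^2 = ω^2 - m^2 := by
    intro ω hω
    exact Real.sq_sqrt (by linarith [hsq ω hω])
  have hη_lt : ∀ ω ∈ Set.Icc a b, Real.sqrt (ω^2 - m^2) < |ω| := by
    intro ω hω
    have h1 : Real.sqrt (ω^2 - m^2) < Real.sqrt (ω^2) :=
      Real.sqrt_lt_sqrt (by linarith [hsq ω hω]) (by nlinarith [hm])
    rwa [Real.sqrt_sq_eq_abs] at h1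
  -- positivity of `h (η ω)` on the compact interval
  have hh_pos : ∀ ω ∈ Set.Icc a b, 0 < h (Real.sqrt (ω^2 - m^2)) := by
    intro ω hω
    obtain ⟨ξ₀, hξ₀, hξ₀ne⟩ := hnotZ ω hω
    have hη := hη_pos ω hω
    have hnξ : ‖ξ₀‖ = Real.sqrt (ω^2 - m^2) := by
      have h1 : ‖ξ₀‖^2 = ω^2 - m^2 := by linarith
      rw [← h1, Real.sqrt_sq (norm_nonneg _)]
    have hFpos : 0 < Ffun ρ ξ₀ := by
      simp only [Ffun]
      exact pow_pos (norm_pos_iff.2 hξ₀ne) 2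
    have hSpos := S_pos hn ρ hη hnξ hFpos
    rw [hhdef]
    simp only [hSdef, hν]
    exact mul_pos (pow_pos hη _) hSpos
  -- minimum of `h ∘ η` over `[a,b]`
  have hkcont : Continuous (fun ω : ℝ => h (Real.sqrt (ω^2 - m^2))) :=
    hhcont.comp (Real.continuous_sqrt.comp ((continuous_pow 2).sub continuous_const))
  obtain ⟨ω₀, hω₀I, hω₀min⟩ := isCompact_Icc.exists_isMinOn (Set.nonempty_Icc.2 hab)
    hkcont.continuousOn
  set c : ℝ := h (Real.sqrt (ω₀^2 - m^2)) with hcdef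
  have hcpos : 0 < c := hh_pos ω₀ hω₀I
  -- uniform continuity of `h` on a large compact interval
  set A : ℝ := max |a| |b| with hAdef
  have hA_bd : ∀ ω ∈ Set.Icc a b, |ω| ≤ A := fun ω hω =>
    abs_le_max_abs_abs hω.1 hω.2
  have hUC := (isCompact_Icc (a := (0:ℝ)) (b := A + m)).uniformContinuousOn_of_continuous
    hhcont.continuousOn
  rw [Metric.uniformContinuousOn_iff] at hUC
  obtain ⟨δ, hδpos, hδ⟩ := hUC (c/2) (half_pos hcpos)
  refine ⟨min (δ/2) m, lt_min (by linarith) hm, ?_⟩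
  intro ω hω ε hε hεI
  have hεδ : ε ≤ δ/2 := le_trans hεI (min_le_left _ _)
  have hεm : ε ≤ m := le_trans hεI (min_le_right _ _)
  set η : ℝ := Real.sqrt (ω^2 - m^2) with hηdef
  have hηpos : 0 < η := hη_pos ω hω
  have hηsq : η^2 = ω^2 - m^2 := hη_sq ω hω
  have hηlt : η < |ω| := hη_lt ω hω
  have hωabs : m < |ω| := hnotm ω hω
  have hωne : ω ≠ 0 := fun hc => by rw [hc, _root_.abs_zero] at hωabs; linarith
  have hηA : η ≤ A := le_trans hηlt.le (hA_bd ω hω)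
  -- pointwise lower bound for `h` on `[η, η+ε]`
  have hhalf : ∀ t ∈ Set.Icc η (η+ε), h η / 2 ≤ h t := by
    intro t ht
    have htK : t ∈ Set.Icc (0:ℝ) (A + m) :=
      ⟨le_trans hηpos.le ht.1, le_trans ht.2 (by linarith)⟩
    have hηK : η ∈ Set.Icc (0:ℝ) (A + m) := ⟨hηpos.le, by linarith⟩
    have hdist : dist t η < δ := by
      rw [Real.dist_eq, _root_.abs_of_nonneg (by linarith [ht.1])]
      linarith [ht.2]
    have h1 := hδ t htK η hηK hdist
    rw [Real.dist_eq] at h1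
    have h2 := (_root_.abs_lt.1 h1).1
    have hcle : c ≤ h η := hω₀min hω
    linarith
  -- interval integral lower bound
  have hint_lb : ε * (h η / 2) ≤ ∫ t in η..(η+ε), h t := by
    have h1 : ∫ t in η..(η+ε), (h η / 2) ≤ ∫ t in η..(η+ε), h t := by
      refine intervalIntegral.integral_mono_on (by linarith) (intervalIntegrable_const)
        (hhcont.intervalIntegrable _ _) ?_
      intro t ht
      exact hhalf t ht
    rwa [intervalIntegral.integral_const, smul_eq_mul, add_sub_cancel_left] at h1
  -- the shell
  set shell : Set (Rn n) := Metric.ball (0 : Rn n) (η+ε) \ Metric.ball (0 : Rn n) η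
    with hshelldef
  have hshell_meas : MeasurableSet shell := measurableSet_ball.diff measurableSet_ball
  have hball' : ∀ r : ℝ, 0 < r →
      ∫ ξ in Metric.ball (0 : Rn n) r, Ffun ρ ξ = ∫ t in (0:ℝ)..r, h t := by
    intro r hr
    have h0 : ∫ ξ in Metric.ball (0 : Rn n) r, Ffun ρ ξ = G r := by
      rw [hGdef]
      simp only [Ffun]
    rw [h0]
    exact hGball r hr
  have hshell_int : ∫ ξ in shell, Ffun ρ ξ = ∫ t in η..(η+ε), h t := by
    have hsub : Metric.ball (0 : Rn n) η ⊆ Metric.ball (0 : Rn n) (η+ε) :=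
      Metric.ball_subset_ball (by linarith)
    have h1 := integral_diff (f := Ffun ρ) (μ := volume) measurableSet_ball
      ((Ffun_integrable ρ).integrableOn) hsub
    rw [hshelldef, h1, hball' (η+ε) (by linarith), hball' η hηpos,
      intervalIntegral.integral_interval_sub_left (hhcont.intervalIntegrable _ _)
      (hhcont.intervalIntegrable _ _)]
  -- the denominator
  set D : Rn n → ℝ := fun ξ => Complex.normSq
    ((((‖ξ‖^2 + m^2 : ℝ)) : ℂ) - ((ω : ℂ) + (ε : ℂ) * Complex.I)^2) with hDdef
  have hD_eq : ∀ ξ : Rn n, D ξ = (‖ξ‖^2 + m^2 - ω^2 + ε^2)^2 + (2*ω*ε)^2 := by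
    intro ξ
    rw [hDdef]
    simp only [Complex.normSq_apply, Complex.sub_re, Complex.sub_im, Complex.ofReal_re,
      Complex.ofReal_im, pow_two, Complex.mul_re, Complex.mul_im, Complex.add_re,
      Complex.add_im, Complex.I_re, Complex.I_im, Complex.ofReal_re, Complex.ofReal_im]
    ring
  have hD_pos : ∀ ξ : Rn n, 0 < D ξ := by
    intro ξ
    rw [hD_eq ξ]
    have : (2*ω*ε)^2 > 0 := by positivity
    nlinarith [sq_nonneg (‖ξ‖^2 + m^2 - ω^2 + ε^2)]
  have hD_lb : ∀ ξ : Rn n, (2*ω*ε)^2 ≤ D ξ := by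
    intro ξ
    rw [hD_eq ξ]
    nlinarith [sq_nonneg (‖ξ‖^2 + m^2 - ω^2 + ε^2)]
  have hD_ub : ∀ ξ ∈ shell, D ξ ≤ 20 * ω^2 * ε^2 := by
    rintro ξ ⟨hξ1, hξ2⟩
    rw [mem_ball_zero_iff] at hξ1
    rw [Metric.mem_ball, not_lt, dist_zero_right] at hξ2
    rw [hD_eq ξ]
    have ht1 : η ≤ ‖ξ‖ := hξ2
    have ht2 : ‖ξ‖ < η + ε := hξ1
    have hsq1 : η^2 ≤ ‖ξ‖^2 := pow_le_pow_left₀ hηpos.le ht1 2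
    have hsq2 : ‖ξ‖^2 < (η + ε)^2 := pow_lt_pow_left₀ ht2 (norm_nonneg ξ) two_ne_zero
    have habs : |ω|^2 = ω^2 := _root_.sq_abs ω
    have hu1 : 0 ≤ ‖ξ‖^2 + m^2 - ω^2 + ε^2 := by linarith [sq_nonneg ε]
    have hexp : (η + ε)^2 = η^2 + 2*(η*ε) + ε*ε := by ring
    have hp1 : η * ε ≤ |ω| * ε := mul_le_mul_of_nonneg_right hηlt.le hε.le
    have hp2 : ε * ε ≤ |ω| * ε := mul_le_mul_of_nonneg_right (le_trans hεm hωabs.le) hε.le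
    have hu2 : ‖ξ‖^2 + m^2 - ω^2 + ε^2 ≤ 4 * |ω| * ε := by
      have hε2 : ε^2 = ε*ε := sq ε ▸ rfl
      linarith [hsq2, hexp, hp1, hp2, hηsq]
    have hu3 : (‖ξ‖^2 + m^2 - ω^2 + ε^2)^2 ≤ (4 * |ω| * ε)^2 := pow_le_pow_left₀ hu1 hu2 2
    have h16 : (4 * |ω| * ε)^2 = 16 * ω^2 * ε^2 := by
      rw [show (4 * |ω| * ε)^2 = 16 * (|ω|^2) * ε^2 from by ring, habs]
    have h4 : (2*ω*ε)^2 = 4*ω^2*ε^2 := by ring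
    linarith [hu3, h16, h4]
  -- the integrand of `SigmaNormSq`
  set Q : Rn n → ℝ := fun ξ => ‖ftR (fun x => ρ x) ξ‖^2 / D ξ with hQdef
  clear_value Q
  have hQF : ∀ ξ, Q ξ = Ffun ρ ξ / D ξ := by
    intro ξ
    rw [hQdef]
    simp only [Ffun]
  have hQnn : ∀ ξ, 0 ≤ Q ξ := by
    intro ξ
    rw [hQF]
    exact div_nonneg (Ffun_nonneg ρ ξ) (hD_pos ξ).le
  have hDcont : Continuous D := by
    rw [hDdef]
    exact Complex.continuous_normSq.comp
      ((Complex.continuous_ofReal.comp ((continuous_norm.pow 2).add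
        continuous_const)).sub continuous_const)
  have hQcont : Continuous Q := by
    have : Q = fun ξ => Ffun ρ ξ / D ξ := funext hQF
    rw [this]
    exact (Ffun_continuous ρ).div hDcont (fun ξ => (hD_pos ξ).ne')
  have hQint : Integrable Q := by
    refine ((Ffun_integrable ρ).const_mul (((2*ω*ε)^2)⁻¹)).mono'
      hQcont.aestronglyMeasurable ?_
    refine Filter.Eventually.of_forall fun ξ => ?_
    rw [Real.norm_of_nonneg (hQnn ξ), hQF]
    rw [← div_eq_inv_mul]
    exact div_le_div_of_nonneg_left (Ffun_nonneg ρ ξ) (by positivity) (hD_lb ξ)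
  -- chain of integral inequalities
  have hstep1 : ∫ ξ in shell, Q ξ ≤ ∫ ξ : Rn n, Q ξ :=
    setIntegral_le_integral hQint (Filter.Eventually.of_forall hQnn)
  have hstep2 : (20 * ω^2 * ε^2)⁻¹ * ∫ ξ in shell, Ffun ρ ξ ≤ ∫ ξ in shell, Q ξ := by
    rw [← integral_const_mul]
    refine setIntegral_mono_on ((((Ffun_integrable ρ)).integrableOn).const_mul _)
      (hQint.integrableOn) hshell_meas ?_
    intro ξ hξ
    rw [hQF, ← div_eq_inv_mul]
    exact div_le_div_of_nonneg_left (Ffun_nonneg ρ ξ) (hD_pos ξ) (hD_ub ξ hξ)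
  have hkey : h η / (40 * ω^2 * ε) ≤ ∫ ξ : Rn n, Q ξ := by
    have h1 : (20 * ω^2 * ε^2)⁻¹ * (ε * (h η / 2)) ≤ ∫ ξ : Rn n, Q ξ := by
      have h2 : (20 * ω^2 * ε^2)⁻¹ * (ε * (h η / 2))
          ≤ (20 * ω^2 * ε^2)⁻¹ * ∫ ξ in shell, Ffun ρ ξ := by
        rw [hshell_int]
        exact mul_le_mul_of_nonneg_left hint_lb (by positivity)
      exact le_trans (le_trans h2 hstep2) hstep1
    have h40 : (40 * ω^2 * ε) ≠ 0 :=
      mul_ne_zero (mul_ne_zero (by norm_num) (pow_ne_zero 2 hωne)) hε.ne'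
    have h20 : (20 * ω^2 * ε^2) ≠ 0 :=
      mul_ne_zero (mul_ne_zero (by norm_num) (pow_ne_zero 2 hωne)) (pow_ne_zero 2 hε.ne')
    have h3 : (20 * ω^2 * ε^2)⁻¹ * (ε * (h η / 2)) = h η / (40 * ω^2 * ε) := by
      rw [eq_div_iff h40]
      rw [show (20 * ω^2 * ε^2)⁻¹ * (ε * (h η / 2)) * (40 * ω^2 * ε)
          = h η * ((20 * ω^2 * ε^2) * (20 * ω^2 * ε^2)⁻¹) from by ring]
      rw [mul_inv_cancel₀ h20, mul_one]
    rwa [h3] at h1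
  -- conclusion
  have hMfun : Mfun m (fun x => ρ x) ω = ((2 * Real.pi)^n)⁻¹ * h η / ω^2 := by
    unfold Mfun sphR
    rw [← hηdef, ← hGdef, hderiv η hηpos]
  rw [hMfun]
  unfold SigmaNormSq
  have hQeq : (∫ ξ : Rn n, ‖ftR (fun x => ρ x) ξ‖^2 / Complex.normSq
      ((((‖ξ‖^2 + m^2 : ℝ)) : ℂ) - ((ω : ℂ) + (ε : ℂ) * Complex.I)^2))
      = ∫ ξ : Rn n, Q ξ := by
    simp only [hQdef, hDdef]
  rw [hQeq]
  have hπ : (0:ℝ) ≤ ((2 * Real.pi)^n)⁻¹ := by positivity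
  have hfinal : ((2 * Real.pi)^n)⁻¹ * h η / ω^2 / (40 * ε)
      = ((2 * Real.pi)^n)⁻¹ * (h η / (40 * ω^2 * ε)) := by
    rw [div_div, mul_div_assoc, show ω^2 * (40 * ε) = 40 * ω^2 * ε from by ring]
  rw [hfinal]
  exact mul_le_mul_of_nonneg_left hkey hπ
end
end
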